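/- arXiv:1302.3738 — 3 statements merged into one kernel-verified Lean document; each statement's English description precedes it below -/
import Mathlib

section
/- Let α > 0. Define v_α : ℝ → [0,∞) by v_α(x) = 0 for x ≤ -c_α, and for x > -c_α let v_α(x) be the unique y > 0 with F(x + iy) = 1/α. Then {z ∈ ℂ⁺ : H_α(z) ∈ ℂ⁺} = {x + iy : x, y ∈ ℝ, y > v_α(x)}, where ℂ⁺ denotes the open upper half-plane. -/
open MeasureTheory Set Filter

/-- `F(x+iy) = ∫₀^∞ t e^{-t}/((x-t)² + y²) dt`. -/
noncomputable def Fint (x y : ℝ) : ℝ :=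
  ∫ t in Set.Ioi (0:ℝ), t * Real.exp (-t) / ((x - t)^2 + y^2)

/-- `H_α(z) = z + α + α ∫₀^∞ t e^{-t}/(z-t) dt`. -/
noncomputable def Hfun (α : ℝ) (z : ℂ) : ℂ :=
  z + (α : ℂ) + (α : ℂ) * ∫ t in Set.Ioi (0:ℝ), ((t * Real.exp (-t) : ℝ) : ℂ) / (z - (t : ℂ))

lemma integrable_texp : IntegrableOn (fun t : ℝ => t * Real.exp (-t)) (Set.Ioi 0) := by
  have h := Real.GammaIntegral_convergent (s := 2) (by norm_num)
  refine h.congr_fun (fun t ht => ?_) measurableSet_Ioi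
  have : (t : ℝ) ^ ((2:ℝ) - 1) = t := by norm_num
  beta_reduce; rw [this]; ring

lemma texp_nonneg {t : ℝ} (ht : t ∈ Set.Ioi (0:ℝ)) : 0 ≤ t * Real.exp (-t) :=
  mul_nonneg (le_of_lt ht) (Real.exp_pos _).le

/-- generic integrability by bound with positive denominator -/
lemma integrable_div_bound (d : ℝ → ℝ) (hd : Measurable d) (m : ℝ) (hm : 0 < m)
    (hdm : ∀ t ∈ Set.Ioi (0:ℝ), m ≤ d t) :
    IntegrableOn (fun t : ℝ => t * Real.exp (-t) / d t) (Set.Ioi 0) := by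
  have hmeas : AEStronglyMeasurable (fun t : ℝ => t * Real.exp (-t) / d t)
      (volume.restrict (Set.Ioi 0)) := by
    apply Measurable.aestronglyMeasurable
    exact (measurable_id.mul (Real.measurable_exp.comp measurable_neg)).div hd
  refine Integrable.mono (integrable_texp.div_const m) hmeas ?_
  filter_upwards [ae_restrict_mem measurableSet_Ioi] with t ht
  have h1 : 0 < d t := lt_of_lt_of_le hm (hdm t ht)
  rw [Real.norm_eq_abs, Real.norm_eq_abs, abs_div, abs_of_nonneg (texp_nonneg ht),
    abs_of_pos h1, abs_of_nonneg (div_nonneg (texp_nonneg ht) hm.le)]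
  exact div_le_div_of_nonneg_left (texp_nonneg ht) hm (hdm t ht)

lemma integrable_F (x y : ℝ) (hy : y ≠ 0) :
    IntegrableOn (fun t : ℝ => t * Real.exp (-t) / ((x - t)^2 + y^2)) (Set.Ioi 0) := by
  refine integrable_div_bound _ (by fun_prop) (y^2) (by positivity) (fun t _ => ?_)
  nlinarith [sq_nonneg (x - t)]

/-- strict integral inequality on Ioi 0 -/
lemma integral_strict_lt (f g : ℝ → ℝ) (hf : IntegrableOn f (Set.Ioi 0))
    (hg : IntegrableOn g (Set.Ioi 0)) (h : ∀ t ∈ Set.Ioi (0:ℝ), f t < g t) :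
    (∫ t in Set.Ioi (0:ℝ), f t) < ∫ t in Set.Ioi (0:ℝ), g t := by
  have key : 0 < ∫ t in Set.Ioi (0:ℝ), (g t - f t) := by
    rw [setIntegral_pos_iff_support_of_nonneg_ae]
    · have hsup : Set.Ioi (0:ℝ) ⊆ Function.support (fun t => g t - f t) ∩ Set.Ioi 0 := by
        intro t ht
        exact ⟨sub_ne_zero.mpr (h t ht).ne', ht⟩
      calc (0:ENNReal) < volume (Set.Ioi (0:ℝ)) := by simp [Real.volume_Ioi]
        _ ≤ _ := measure_mono hsup
    · filter_upwards [ae_restrict_mem measurableSet_Ioi] with t ht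
      exact sub_nonneg.mpr (h t ht).le
    · exact hg.sub hf
  have := integral_sub hg hf
  linarith [this ▸ key]

lemma integrable_Hint (z : ℂ) (hz : z.im ≠ 0) :
    IntegrableOn (fun t : ℝ => ((t * Real.exp (-t) : ℝ) : ℂ) / (z - (t : ℂ))) (Set.Ioi 0) := by
  have hmeas : AEStronglyMeasurable (fun t : ℝ => ((t * Real.exp (-t) : ℝ) : ℂ) / (z - (t : ℂ)))
      (volume.restrict (Set.Ioi 0)) := by
    apply Measurable.aestronglyMeasurable; fun_prop
  refine Integrable.mono (integrable_texp.div_const |z.im|) hmeas ?_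
  filter_upwards [ae_restrict_mem measurableSet_Ioi] with t ht
  rw [norm_div, Real.norm_eq_abs, abs_of_nonneg (div_nonneg (texp_nonneg ht) (abs_nonneg _))]
  rw [Complex.norm_real, Real.norm_eq_abs, abs_of_nonneg (texp_nonneg ht)]
  apply div_le_div_of_nonneg_left (texp_nonneg ht) (abs_pos.mpr hz)
  calc |z.im| = |(z - (t:ℂ)).im| := by simp
    _ ≤ ‖z - (t:ℂ)‖ := Complex.abs_im_le_norm _
  
lemma Him (α : ℝ) (z : ℂ) (hz : z.im ≠ 0) :
    (Hfun α z).im = z.im * (1 - α * Fint z.re z.im) := by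
  have hint := integrable_Hint z hz
  have him : (∫ t in Set.Ioi (0:ℝ), ((t * Real.exp (-t) : ℝ) : ℂ) / (z - (t : ℂ))).im
      = ∫ t in Set.Ioi (0:ℝ), (((t * Real.exp (-t) : ℝ) : ℂ) / (z - (t : ℂ))).im :=
    (integral_im hint).symm
  have heq : ∀ t : ℝ, (((t * Real.exp (-t) : ℝ) : ℂ) / (z - (t : ℂ))).im
      = (-z.im) * (t * Real.exp (-t) / ((z.re - t)^2 + z.im^2)) := by
    intro t
    rw [Complex.div_im]
    simp only [Complex.ofReal_im, Complex.ofReal_re, Complex.sub_im, Complex.sub_re,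
      Complex.normSq_apply]
    have hD : (z.re - t) * (z.re - t) + (z.im - 0) * (z.im - 0) = (z.re - t)^2 + z.im^2 := by
      ring
    rw [hD]; ring
  rw [Hfun]
  simp only [Complex.add_im, Complex.mul_im, Complex.ofReal_im, Complex.ofReal_re]
  rw [him]
  simp only [heq]
  rw [integral_const_mul, Fint]
  ring

lemma Fint_strict_anti (x : ℝ) {y1 y2 : ℝ} (h1 : 0 < y1) (h12 : y1 < y2) :
    Fint x y2 < Fint x y1 := by
  apply integral_strict_lt _ _ (integrable_F x y2 (h1.trans h12).ne') (integrable_F x y1 h1.ne')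
  intro t ht
  have htp : (0:ℝ) < t := ht
  apply div_lt_div_of_pos_left (by positivity)
  · nlinarith [sq_nonneg (x - t)]
  · nlinarith [sq_nonneg (x - t)]

lemma Fint_lt_of_le (α : ℝ) (hα : 0 < α) (c : ℝ) (hc : 0 < c)
    (hceq : (∫ t in Set.Ioi (0:ℝ), t * Real.exp (-t) / (c + t)^2) = 1/α)
    {x y : ℝ} (hx : x ≤ -c) (hy : 0 < y) : Fint x y < 1/α := by
  rw [← hceq, Fint]
  apply integral_strict_lt _ _ (integrable_F x y hy.ne')
  · refine integrable_div_bound _ (by fun_prop) (c^2) (by positivity) (fun t ht => ?_)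
    have : (0:ℝ) < t := ht
    nlinarith
  · intro t ht
    have htp : (0:ℝ) < t := ht
    apply div_lt_div_of_pos_left (by positivity) (by positivity)
    nlinarith [sq_nonneg (x - t)]

/-- `{z ∈ ℂ⁺ : H_α(z) ∈ ℂ⁺} = {x+iy : y > v_α(x)}`. -/
theorem free_gamma_upper_half_plane_description
    (α : ℝ) (hα : 0 < α) (c : ℝ) (hc : 0 < c)
    (hceq : (∫ t in Set.Ioi (0:ℝ), t * Real.exp (-t) / (c + t)^2) = 1/α)
    (v : ℝ → ℝ) (hv0 : ∀ x ≤ -c, v x = 0)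
    (hvpos : ∀ x, -c < x → 0 < v x)
    (hveq : ∀ x, -c < x → Fint x (v x) = 1/α)
    (hvuniq : ∀ x, -c < x → ∀ y, 0 < y → Fint x y = 1/α → y = v x) :
    {z : ℂ | 0 < z.im ∧ 0 < (Hfun α z).im} = {z : ℂ | v z.re < z.im} := by
  ext z
  simp only [mem_setOf_eq]
  constructor
  · rintro ⟨hy, hH⟩
    rw [Him α z hy.ne'] at hH
    have hF : Fint z.re z.im < 1/α := by
      have h1 : 0 < 1 - α * Fint z.re z.im := by
        by_contra h
        push_neg at h
        nlinarith
      rw [lt_div_iff₀ hα, mul_comm]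
      linarith
    by_cases hx : z.re ≤ -c
    · rw [hv0 z.re hx]; exact hy
    · push_neg at hx
      by_contra h
      push_neg at h
      rcases lt_or_eq_of_le h with h' | h'
      · have := Fint_strict_anti z.re hy h'
        rw [hveq z.re hx] at this
        linarith
      · rw [h', hveq z.re hx] at hF
        exact lt_irrefl _ hF
  · intro hvy
    have hy : 0 < z.im := by
      by_cases hx : z.re ≤ -c
      · rw [hv0 z.re hx] at hvy; exact hvy
      · push_neg at hx
        exact lt_trans (hvpos z.re hx) hvy
    have hF : Fint z.re z.im < 1/α := by
      by_cases hx : z.re ≤ -c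
      · exact Fint_lt_of_le α hα c hc hceq hx hy
      · push_neg at hx
        have := Fint_strict_anti z.re (hvpos z.re hx) hvy
        rw [hveq z.re hx] at this
        exact this
    refine ⟨hy, ?_⟩
    rw [Him α z hy.ne']
    have : α * Fint z.re z.im < 1 := by
      rw [lt_div_iff₀ hα] at hF
      linarith [mul_comm α (Fint z.re z.im)]
    nlinarith
end

section
/- Let α > 0. Then H_α satisfies the differential equation H_α′(z) = α + z + (z⁻¹ − 1) H_α(z) for all z ∈ ℂ∖[0,∞). -/
open MeasureTheory Set Filter

lemma fg_int_texp : IntegrableOn (fun t => t * Real.exp (-t)) (Ioi (0:ℝ)) := by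
  have h := Real.GammaIntegral_convergent (s := 2) (by norm_num)
  refine (integrableOn_congr_fun ?_ measurableSet_Ioi).mp h
  intro x hx
  simp only []
  rw [show (2:ℝ) - 1 = 1 by norm_num, Real.rpow_one]
  ring

lemma fg_int_exp : IntegrableOn (fun t => Real.exp (-t)) (Ioi (0:ℝ)) := by
  have h := Real.GammaIntegral_convergent (s := 1) (by norm_num)
  refine (integrableOn_congr_fun ?_ measurableSet_Ioi).mp h
  intro x hx
  simp

/-- lower bound for `|z - t|` when `z ∉ [0,∞)`. -/
lemma fg_lower_bound {z : ℂ} (hz : z.im ≠ 0 ∨ z.re < 0) :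
    ∃ c > 0, ∀ t : ℝ, 0 ≤ t → c ≤ ‖z - (t:ℂ)‖ := by
  rcases hz with h | h
  · refine ⟨|z.im|, abs_pos.mpr h, fun t ht => ?_⟩
    calc |z.im| = |(z - (t:ℂ)).im| := by simp
    _ ≤ ‖z - (t:ℂ)‖ := Complex.abs_im_le_norm _
  · refine ⟨-z.re, by linarith, fun t ht => ?_⟩
    calc -z.re ≤ |z.re - t| := by rw [abs_sub_comm]; calc -z.re ≤ t - z.re := by linarith
                                  _ ≤ |t - z.re| := le_abs_self _
    _ = |(z - (t:ℂ)).re| := by simp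
    _ ≤ ‖z - (t:ℂ)‖ := Complex.abs_re_le_norm _

/-- integrability of `g(t)/(z-t)^p` over `(0,∞)`. -/
lemma fg_integrable_aux {z : ℂ} {c : ℝ} (hc : 0 < c)
    (hlb : ∀ t : ℝ, 0 ≤ t → c ≤ ‖z - (t:ℂ)‖)
    (g : ℝ → ℝ) (hg_cont : Continuous g)
    (hg_int : IntegrableOn g (Ioi 0)) (p : ℕ) :
    IntegrableOn (fun t : ℝ => ((g t : ℝ) : ℂ) / (z - (t:ℂ))^p) (Ioi 0) := by
  have hne : ∀ t : ℝ, 0 ≤ t → (z - (t:ℂ)) ≠ 0 := by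
    intro t ht h0
    have := hlb t ht
    rw [h0] at this; simp at this; linarith
  have hmeas : AEStronglyMeasurable (fun t : ℝ => ((g t : ℝ) : ℂ) / (z - (t:ℂ))^p)
      (volume.restrict (Ioi 0)) := by
    apply ContinuousOn.aestronglyMeasurable _ measurableSet_Ioi
    apply ContinuousOn.div
    · exact (Complex.continuous_ofReal.comp hg_cont).continuousOn
    · exact (ContinuousOn.pow (by fun_prop) p)
    · intro t ht
      exact pow_ne_zero p (hne t (le_of_lt ht))
  refine Integrable.mono' ((hg_int.norm).div_const (c^p)) hmeas ?_
  filter_upwards [ae_restrict_mem measurableSet_Ioi] with t ht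
  have hct : c ≤ ‖z - (t:ℂ)‖ := hlb t (le_of_lt ht)
  rw [norm_div, norm_pow]
  have hcp : (0:ℝ) < c^p := pow_pos hc p
  have hnp : (0:ℝ) < ‖z - (t:ℂ)‖^p := pow_pos (lt_of_lt_of_le hc hct) p
  rw [div_le_div_iff₀ hnp hcp]
  calc ‖((g t : ℝ) : ℂ)‖ * c^p = |g t| * c^p := by rw [Complex.norm_real]; rfl
  _ ≤ ‖g t‖ * ‖(z - (t:ℂ))‖^p := by
      apply mul_le_mul_of_nonneg_left _ (abs_nonneg _)
      exact pow_le_pow_left₀ (le_of_lt hc) hct p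

/-- `H_α′(z) = α + z + (z⁻¹ − 1) H_α(z)` for all `z ∈ ℂ∖[0,∞)`. -/
theorem free_gamma_H_differential_equation
    (α : ℝ) (hα : 0 < α) :
    ∀ z : ℂ, (z.im ≠ 0 ∨ z.re < 0) →
      deriv (Hfun α) z = (α : ℂ) + z + (z⁻¹ - 1) * Hfun α z := by
  intro z hz
  obtain ⟨c, hc, hlb⟩ := fg_lower_bound hz
  have hne : ∀ t : ℝ, 0 ≤ t → (z - (t:ℂ)) ≠ 0 := by
    intro t ht h0
    have := hlb t ht
    rw [h0] at this; simp at this; linarith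
  have hz0 : z ≠ 0 := by
    intro h0
    have := hlb 0 le_rfl
    rw [h0] at this; simp at this; linarith
  -- the three integrals
  set I : ℂ := ∫ t in Set.Ioi (0:ℝ), ((t * Real.exp (-t) : ℝ) : ℂ) / (z - (t:ℂ)) with hI
  set J : ℂ := ∫ t in Set.Ioi (0:ℝ), ((Real.exp (-t) : ℝ) : ℂ) / (z - (t:ℂ)) with hJ
  set K : ℂ := ∫ t in Set.Ioi (0:ℝ), ((t * Real.exp (-t) : ℝ) : ℂ) / (z - (t:ℂ))^2 with hK
  have hInt_I : IntegrableOn (fun t : ℝ => ((t * Real.exp (-t) : ℝ) : ℂ) / (z - (t:ℂ))^1) (Ioi 0) :=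
    fg_integrable_aux hc hlb _ (by fun_prop) fg_int_texp 1
  simp only [pow_one] at hInt_I
  have hInt_J : IntegrableOn (fun t : ℝ => ((Real.exp (-t) : ℝ) : ℂ) / (z - (t:ℂ))^1) (Ioi 0) :=
    fg_integrable_aux hc hlb _ (by fun_prop) fg_int_exp 1
  simp only [pow_one] at hInt_J
  have hInt_K : IntegrableOn (fun t : ℝ => ((t * Real.exp (-t) : ℝ) : ℂ) / (z - (t:ℂ))^2) (Ioi 0) :=
    fg_integrable_aux hc hlb _ (by fun_prop) fg_int_texp 2
  -- Step 1: I = -1 + z * J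
  have step1 : I = -1 + z * J := by
    have key : ∀ t ∈ Ioi (0:ℝ), ((t * Real.exp (-t) : ℝ) : ℂ) / (z - (t:ℂ)) =
        -((Real.exp (-t) : ℝ) : ℂ) + z * (((Real.exp (-t) : ℝ) : ℂ) / (z - (t:ℂ))) := by
      intro t ht
      have h := hne t (le_of_lt ht)
      field_simp
      push_cast
      ring
    rw [hI, setIntegral_congr_fun measurableSet_Ioi key]
    have hint1 : IntegrableOn (fun x : ℝ => -((Real.exp (-x) : ℝ) : ℂ)) (Ioi 0) :=
      (fg_int_exp.ofReal (𝕜 := ℂ)).neg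
    rw [integral_add hint1 (hInt_J.const_mul z)]
    have h1 : ∫ (a : ℝ) in Ioi 0, ((Real.exp (-a) : ℝ) : ℂ)
        = ((∫ (a : ℝ) in Ioi 0, Real.exp (-a) : ℝ) : ℂ) := integral_ofReal
    rw [integral_neg, integral_const_mul, h1, integral_exp_neg_Ioi, hJ]
    norm_num
  -- Step 2: K = I - J  (integration by parts)
  have step2 : K = I - J := by
    have hg_int : IntegrableOn (fun t : ℝ => (1 - t) * Real.exp (-t)) (Ioi 0) := by
      have h := fg_int_exp.sub fg_int_texp
      refine (integrableOn_congr_fun ?_ measurableSet_Ioi).mp h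
      intro x _; simp only [Pi.sub_apply]; ring
    have hInt_L : IntegrableOn
        (fun t : ℝ => (((1 - t) * Real.exp (-t) : ℝ) : ℂ) / (z - (t:ℂ))^1) (Ioi 0) :=
      fg_integrable_aux hc hlb _ (by fun_prop) hg_int 1
    simp only [pow_one] at hInt_L
    have hInt_f' : IntegrableOn (fun t : ℝ =>
        (((1 - t) * Real.exp (-t) : ℝ) : ℂ) / (z - (t:ℂ))
        + ((t * Real.exp (-t) : ℝ) : ℂ) / (z - (t:ℂ))^2) (Ioi 0) := hInt_L.add hInt_K
    have hderiv : ∀ t ∈ Ioi (0:ℝ), HasDerivAt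
        (fun s : ℝ => ((s * Real.exp (-s) : ℝ) : ℂ) / (z - (s:ℂ)))
        ((((1 - t) * Real.exp (-t) : ℝ) : ℂ) / (z - (t:ℂ))
          + ((t * Real.exp (-t) : ℝ) : ℂ) / (z - (t:ℂ))^2) t := by
      intro t ht
      have htpos : (0:ℝ) < t := ht
      have htne := hne t htpos.le
      have h1 : HasDerivAt (fun s : ℝ => s * Real.exp (-s)) ((1 - t) * Real.exp (-t)) t := by
        have h := (hasDerivAt_id t).mul
          ((Real.hasDerivAt_exp (-t)).comp t ((hasDerivAt_id t).neg))
        refine h.congr_deriv ?_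
        simp only [Function.comp_apply, id_eq]
        ring
      have h2 : HasDerivAt (fun s : ℝ => ((s * Real.exp (-s) : ℝ) : ℂ))
          (((1 - t) * Real.exp (-t) : ℝ) : ℂ) t := h1.ofReal_comp
      have h3 : HasDerivAt (fun s : ℝ => z - (s:ℂ)) (-1) t := by
        have h := Complex.ofRealCLM.hasDerivAt (x := t)
        simpa using h.const_sub z
      have h4 := h2.div h3 htne
      refine h4.congr_deriv ?_
      field_simp
      push_cast
      ring
    have hcont : ContinuousWithinAt
        (fun s : ℝ => ((s * Real.exp (-s) : ℝ) : ℂ) / (z - (s:ℂ))) (Ici 0) 0 := by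
      apply ContinuousAt.continuousWithinAt
      apply ContinuousAt.div
      · fun_prop
      · fun_prop
      · exact hne 0 le_rfl
    have htend : Tendsto (fun s : ℝ => ((s * Real.exp (-s) : ℝ) : ℂ) / (z - (s:ℂ)))
        atTop (nhds 0) := by
      have hb : ∀ᶠ s : ℝ in atTop,
          ‖((s * Real.exp (-s) : ℝ) : ℂ) / (z - (s:ℂ))‖ ≤ s * Real.exp (-s) / c := by
        filter_upwards [eventually_ge_atTop (0:ℝ)] with s hs
        rw [norm_div, Complex.norm_real, Real.norm_eq_abs,
          abs_of_nonneg (mul_nonneg hs (Real.exp_pos _).le)]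
        have hle : c ≤ ‖z - (s:ℂ)‖ := hlb s hs
        gcongr
      have hg : Tendsto (fun s : ℝ => s * Real.exp (-s) / c) atTop (nhds 0) := by
        have h := (Real.tendsto_pow_mul_exp_neg_atTop_nhds_zero 1).div_const c
        simpa using h
      exact squeeze_zero_norm' hb hg
    have hIBP := integral_Ioi_of_hasDerivAt_of_tendsto hcont hderiv hInt_f' htend
    rw [integral_add hInt_L hInt_K] at hIBP
    simp only [zero_mul, Complex.ofReal_zero, zero_div, sub_zero] at hIBP
    have hL : (∫ t in Ioi (0:ℝ), (((1 - t) * Real.exp (-t) : ℝ) : ℂ) / (z - (t:ℂ)))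
        = J - I := by
      have key : ∀ t ∈ Ioi (0:ℝ), (((1 - t) * Real.exp (-t) : ℝ) : ℂ) / (z - (t:ℂ))
          = ((Real.exp (-t) : ℝ) : ℂ) / (z - (t:ℂ))
            - ((t * Real.exp (-t) : ℝ) : ℂ) / (z - (t:ℂ)) := by
        intro t _
        rw [div_sub_div_same]
        congr 1
        push_cast
        ring
      rw [setIntegral_congr_fun measurableSet_Ioi key, integral_sub hInt_J hInt_I, hJ, hI]
    rw [hL] at hIBP
    rw [hK]
    linear_combination hIBP
  -- Step 3: deriv (Hfun α) z = 1 - α * K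
  have step3 : deriv (Hfun α) z = 1 - (α:ℂ) * K := by
    have hε : (0:ℝ) < c/2 := by linarith
    have hball : ∀ x ∈ Metric.ball z (c/2), ∀ t : ℝ, 0 < t →
        c/2 ≤ ‖x - (t:ℂ)‖ := by
      intro x hx t ht
      have h1 := hlb t ht.le
      have h2 : ‖z - x‖ < c/2 := by
        rw [Metric.mem_ball, Complex.dist_eq] at hx
        rw [← norm_neg]; simpa [neg_sub] using hx
      have h3 : ‖z - (t:ℂ)‖ ≤ ‖z - x‖ + ‖x - (t:ℂ)‖ := by
        calc ‖z - (t:ℂ)‖ = ‖(z - x) + (x - (t:ℂ))‖ := by ring_nf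
        _ ≤ _ := norm_add_le _ _
      linarith
    have hD := hasDerivAt_integral_of_dominated_loc_of_deriv_le (μ := volume.restrict (Ioi 0))
      (F := fun (x : ℂ) (t : ℝ) => ((t * Real.exp (-t) : ℝ) : ℂ) / (x - (t:ℂ)))
      (F' := fun (x : ℂ) (t : ℝ) => -(((t * Real.exp (-t) : ℝ) : ℂ) / (x - (t:ℂ))^2))
      (x₀ := z) (bound := fun t => t * Real.exp (-t) / (c/2)^2) (Metric.ball_mem_nhds z hε)
      (Eventually.of_forall fun x => by
        apply Measurable.aestronglyMeasurable
        apply Measurable.div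
        · fun_prop
        · fun_prop)
      hInt_I
      (by apply Measurable.aestronglyMeasurable; apply Measurable.neg; apply Measurable.div <;> fun_prop)
      (by
        filter_upwards [ae_restrict_mem measurableSet_Ioi] with t ht
        intro x hx
        have hcx := hball x hx t ht
        rw [norm_neg, norm_div, norm_pow]
        have h1 : (0:ℝ) < ‖x - (t:ℂ)‖^2 := pow_pos (lt_of_lt_of_le hε hcx) 2
        rw [div_le_div_iff₀ h1 (by positivity)]
        have htpos : (0:ℝ) < t := ht
        have h2 : ‖((t * Real.exp (-t) : ℝ) : ℂ)‖ = t * Real.exp (-t) := by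
          rw [Complex.norm_real, Real.norm_eq_abs,
            abs_of_nonneg (mul_nonneg htpos.le (Real.exp_pos _).le)]
        rw [h2]
        apply mul_le_mul_of_nonneg_left _ (mul_nonneg htpos.le (Real.exp_pos _).le)
        exact pow_le_pow_left₀ (le_of_lt hε) hcx 2)
      ((fg_int_texp.div_const _))
      (by
        filter_upwards [ae_restrict_mem measurableSet_Ioi] with t ht
        intro x hx
        have hcx := hball x hx t ht
        have hx0 : x - (t:ℂ) ≠ 0 := by
          intro h0; rw [h0] at hcx; simp at hcx; linarith
        have h1 : HasDerivAt (fun y : ℂ => y - (t:ℂ)) 1 x := (hasDerivAt_id x).sub_const _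
        have h2 := (h1.inv hx0).const_mul ((t * Real.exp (-t) : ℝ) : ℂ)
        have h3 : HasDerivAt (fun y : ℂ => ((t * Real.exp (-t) : ℝ) : ℂ) / (y - (t:ℂ)))
            (((t * Real.exp (-t) : ℝ) : ℂ) * (-1 / (x - (t:ℂ)) ^ 2)) x := by
          simpa only [div_eq_mul_inv, Pi.inv_apply] using h2
        refine h3.congr_deriv ?_
        ring)
    have hDeriv : HasDerivAt (Hfun α) (1 + (α:ℂ) * ∫ t in Ioi (0:ℝ),
        -(((t * Real.exp (-t) : ℝ) : ℂ) / (z - (t:ℂ))^2)) z :=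
      ((hasDerivAt_id z).add_const ((α:ℂ))).add (hD.2.const_mul ((α:ℂ)))
    rw [hDeriv.deriv, integral_neg, hK]
    ring
  -- Conclude by algebra
  rw [step3, step2, step1]
  have hJeq : J = (I + 1) / z := by rw [step1]; field_simp; ring
  rw [hJeq]
  unfold Hfun
  rw [← hI]
  field_simp
  ring
end

section
/- Both α ↦ c_α and α ↦ s_α are real-analytic functions on (0,∞), with dc_α/dα = c_α(1 + c_α)/(α(α − 2c_α − c_α²)) and ds_α/dα = c_α(α + 1)/(α(1 + c_α)). In particular s_α is a strictly increasing function of α; moreover lim_{α→0} s_α = 0 and lim_{α→∞} s_α = ∞. -/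
open MeasureTheory Set Filter

open Real

lemma expInt : IntegrableOn (fun t : ℝ => Real.exp (-t)) (Set.Ioi 0) := by
  simpa using exp_neg_integrableOn_Ioi 0 one_pos

lemma contAux {x : ℝ} (hx : 0 < x) (m n : ℕ) :
    ContinuousOn (fun t : ℝ => t ^ m * Real.exp (-t) / (x + t) ^ n) (Set.Ici 0) := by
  apply ContinuousOn.div
  · fun_prop
  · fun_prop
  · intro t ht
    have : 0 < x + t := by simp only [mem_Ici] at ht; linarith
    positivity

lemma intAux {x : ℝ} (hx : 0 < x) {m n : ℕ} (hmn : m ≤ n) :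
    IntegrableOn (fun t : ℝ => t ^ m * Real.exp (-t) / (x + t) ^ n) (Set.Ioi 0) := by
  apply Integrable.mono' (g := fun t => (x ^ (n - m))⁻¹ * Real.exp (-t))
    (expInt.const_mul _)
  · exact ((contAux hx m n).mono Ioi_subset_Ici_self).aestronglyMeasurable measurableSet_Ioi
  · filter_upwards [ae_restrict_mem measurableSet_Ioi] with t ht
    simp only [mem_Ioi] at ht
    have hxt : 0 < x + t := by linarith
    have h1 : t ^ m * x ^ (n - m) ≤ (x + t) ^ n := by
      calc t ^ m * x ^ (n - m) ≤ (x + t) ^ m * (x + t) ^ (n - m) := by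
            apply mul_le_mul
            · exact pow_le_pow_left₀ ht.le (by linarith) m
            · exact pow_le_pow_left₀ hx.le (by linarith) _
            · positivity
            · positivity
        _ = (x + t) ^ n := by rw [← pow_add]; congr 1; omega
    have hnn : 0 ≤ t ^ m * Real.exp (-t) / (x + t) ^ n := by positivity
    rw [Real.norm_of_nonneg hnn]
    rw [div_le_iff₀ (by positivity)]
    have hxp : (0:ℝ) < x ^ (n - m) := by positivity
    rw [inv_mul_eq_div, div_mul_eq_mul_div, le_div_iff₀ hxp]
    calc t ^ m * Real.exp (-t) * x ^ (n-m) = Real.exp (-t) * (t ^ m * x ^ (n-m)) := by ring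
      _ ≤ Real.exp (-t) * (x+t)^n := by
          exact mul_le_mul_of_nonneg_left h1 (Real.exp_pos _).le
      _ = Real.exp (-t) * (x+t)^n := rfl

lemma intE {x : ℝ} (hx : 0 < x) (n : ℕ) :
    IntegrableOn (fun t : ℝ => Real.exp (-t) / (x + t) ^ n) (Set.Ioi 0) := by
  simpa using intAux hx (Nat.zero_le n)

lemma intT {x : ℝ} (hx : 0 < x) {n : ℕ} (hn : 1 ≤ n) :
    IntegrableOn (fun t : ℝ => t * Real.exp (-t) / (x + t) ^ n) (Set.Ioi 0) := by
  simpa using intAux hx hn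

lemma ftcAux {x : ℝ} (hx : 0 < x) (n : ℕ) :
    ∫ t in Set.Ioi (0:ℝ), (Real.exp (-t) / (x+t)^(n+1)
      + (n+1) * Real.exp (-t) / (x+t)^(n+2)) = 1 / x^(n+1) := by
  have hne : ∀ t : ℝ, t ∈ Set.Ici (0:ℝ) → (x + t) ≠ 0 := by
    intro t ht; simp only [mem_Ici] at ht; positivity
  have hcont : ContinuousOn (fun t : ℝ => -Real.exp (-t) * ((x+t)^(n+1))⁻¹) (Set.Ici 0) := by
    apply ContinuousOn.mul (by fun_prop)
    exact ContinuousOn.inv₀ (by fun_prop) (fun t ht => pow_ne_zero _ (hne t ht))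
  have hderiv : ∀ t ∈ Set.Ioi (0:ℝ),
      HasDerivAt (fun t : ℝ => -Real.exp (-t) * ((x+t)^(n+1))⁻¹)
        (Real.exp (-t) / (x+t)^(n+1) + (n+1) * Real.exp (-t) / (x+t)^(n+2)) t := by
    intro t ht
    simp only [mem_Ioi] at ht
    have hxt : x + t ≠ 0 := by positivity
    have h1 : HasDerivAt (fun t : ℝ => x + t) 1 t := (hasDerivAt_id t).const_add x
    have h2 : HasDerivAt (fun t : ℝ => (x+t)^(n+1)) ((n+1) * (x+t)^n * 1) t := by
      simpa using h1.fun_pow (n+1)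
    have h3 : HasDerivAt (fun t : ℝ => ((x+t)^(n+1))⁻¹)
        (-((n+1) * (x+t)^n * 1) / ((x+t)^(n+1))^2) t := h2.inv (pow_ne_zero _ hxt)
    have h4 : HasDerivAt (fun t : ℝ => -Real.exp (-t)) (Real.exp (-t)) t := by
      have := (Real.hasDerivAt_exp (-t)).comp t (hasDerivAt_neg t)
      simpa using this.fun_neg
    have := h4.fun_mul h3
    refine this.congr_deriv ?_
    have hp1 : (x+t)^(n+2) = (x+t)^(n+1) * (x+t) := by ring
    field_simp
    ring
  have htend : Tendsto (fun t : ℝ => -Real.exp (-t) * ((x+t)^(n+1))⁻¹) atTop (nhds 0) := by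
    have hA : Tendsto (fun t : ℝ => -Real.exp (-t)) atTop (nhds 0) := by
      simpa using tendsto_exp_neg_atTop_nhds_zero.neg
    have hB : Tendsto (fun t : ℝ => ((x+t)^(n+1))⁻¹) atTop (nhds 0) := by
      apply Tendsto.inv_tendsto_atTop
      exact (tendsto_pow_atTop (by omega)).comp
        (tendsto_atTop_add_const_left _ x tendsto_id)
    simpa using hA.mul hB
  have hint : IntegrableOn (fun t : ℝ => Real.exp (-t) / (x+t)^(n+1)
      + (n+1) * Real.exp (-t) / (x+t)^(n+2)) (Set.Ioi 0) := by
    apply Integrable.add (intE hx (n+1))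
    simpa [mul_div_assoc] using (intE hx (n+2)).const_mul ((n:ℝ)+1)
  have := integral_Ioi_of_hasDerivAt_of_tendsto
    (hcont.continuousWithinAt (by simp)) hderiv hint htend
  rw [this]
  simp [hx.ne']

lemma posAux {x : ℝ} (hx : 0 < x) {n : ℕ} (hn : 1 ≤ n) :
    0 < ∫ t in Set.Ioi (0:ℝ), t * Real.exp (-t) / (x + t) ^ n := by
  rw [setIntegral_pos_iff_support_of_nonneg_ae ?_ (intT hx hn)]
  · have hsub : Set.Ioi (0:ℝ) ⊆ Function.support (fun t : ℝ => t * Real.exp (-t) / (x+t)^n) := by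
      intro t ht
      simp only [mem_Ioi] at ht
      have : 0 < t * Real.exp (-t) / (x+t)^n := by positivity
      exact fun h => by simp [h] at this
    rw [Set.inter_eq_self_of_subset_right hsub, Real.volume_Ioi]
    simp
  · filter_upwards [ae_restrict_mem measurableSet_Ioi] with t ht
    simp only [mem_Ioi] at ht
    positivity

section identities
variable {x α : ℝ} (hx : 0 < x) (hα : 0 < α)
  (hG : ∫ t in Set.Ioi (0:ℝ), t * Real.exp (-t) / (x + t) ^ 2 = 1 / α)
include hx hα hG

lemma I1_eq : ∫ t in Set.Ioi (0:ℝ), Real.exp (-t) / (x + t) = (α+1)/(α*(1+x)) := by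
  have hA := ftcAux hx 0
  simp only [pow_one, Nat.cast_zero, zero_add, one_mul] at hA
  have hC : (∫ t in Set.Ioi (0:ℝ), t * Real.exp (-t) / (x + t) ^ 2)
      = (∫ t in Set.Ioi (0:ℝ), Real.exp (-t) / (x + t))
        - x * ∫ t in Set.Ioi (0:ℝ), Real.exp (-t) / (x + t) ^ 2 := by
    rw [← integral_const_mul, ← integral_sub (by simpa [IntegrableOn] using intE hx 1) ((intE hx 2).const_mul x)]
    apply setIntegral_congr_fun measurableSet_Ioi
    intro t ht
    simp only [mem_Ioi] at ht
    have hxt : x + t ≠ 0 := by positivity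
    field_simp
    ring
  rw [integral_add (by simpa [IntegrableOn] using intE hx 1) (intE hx 2)] at hA
  rw [hG] at hC
  have h1x : (1:ℝ) + x ≠ 0 := by positivity
  field_simp at hC hA ⊢
  nlinarith [hA, hC]

lemma J2_eq : ∫ t in Set.Ioi (0:ℝ), Real.exp (-t) / (x + t) ^ 2
    = 1/x - (α+1)/(α*(1+x)) := by
  have hA := ftcAux hx 0
  simp only [pow_one, Nat.cast_zero, zero_add, one_mul] at hA
  rw [integral_add (by simpa [IntegrableOn] using intE hx 1) (intE hx 2)] at hA
  rw [I1_eq hx hα hG] at hA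
  linarith

lemma g3_eq : ∫ t in Set.Ioi (0:ℝ), t * Real.exp (-t) / (x + t) ^ 3
    = (α - 2*x - x^2) / (2*α*x*(1+x)) := by
  have hB := ftcAux hx 1
  norm_num at hB
  rw [integral_add (intE hx 2) (by simpa [mul_div_assoc] using (intE hx 3).const_mul (2:ℝ))] at hB
  have hE : (∫ t in Set.Ioi (0:ℝ), t * Real.exp (-t) / (x + t) ^ 3)
      = (∫ t in Set.Ioi (0:ℝ), Real.exp (-t) / (x + t) ^ 2)
        - x * ∫ t in Set.Ioi (0:ℝ), Real.exp (-t) / (x + t) ^ 3 := by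
    rw [← integral_const_mul, ← integral_sub (intE hx 2) ((intE hx 3).const_mul x)]
    apply setIntegral_congr_fun measurableSet_Ioi
    intro t ht
    simp only [mem_Ioi] at ht
    have hxt : x + t ≠ 0 := by positivity
    field_simp
    ring
  simp only [mul_div_assoc, integral_const_mul] at hB
  rw [J2_eq hx hα hG] at hB hE
  have h1x : (1:ℝ) + x ≠ 0 := by positivity
  have hJ3 : ∫ t in Set.Ioi (0:ℝ), Real.exp (-t) / (x + t) ^ 3
      = (1/x^2 - (1/x - (α+1)/(α*(1+x))))/2 := by
    have hq : (1:ℝ)/x^2 = (x^2)⁻¹ := one_div _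
    linarith
  rw [hJ3] at hE
  rw [hE]
  field_simp
  ring

lemma g1_eq : ∫ t in Set.Ioi (0:ℝ), t * Real.exp (-t) / (x + t)
    = 1 - x * ((α+1)/(α*(1+x))) := by
  have hD : (∫ t in Set.Ioi (0:ℝ), t * Real.exp (-t) / (x + t))
      = (∫ t in Set.Ioi (0:ℝ), Real.exp (-t))
        - x * ∫ t in Set.Ioi (0:ℝ), Real.exp (-t) / (x + t) := by
    rw [← integral_const_mul, ← integral_sub expInt (((intE hx 1).congr_fun
      (fun t ht => by simp) measurableSet_Ioi).const_mul x)]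
    · apply setIntegral_congr_fun measurableSet_Ioi
      intro t ht
      simp only [mem_Ioi] at ht
      have hxt : x + t ≠ 0 := by positivity
      field_simp
      ring
  rw [hD, integral_exp_neg_Ioi_zero, I1_eq hx hα hG]

end identities

noncomputable def Gc (z : ℂ) : ℂ :=
  ∫ t in Set.Ioi (0:ℝ), ((t * Real.exp (-t) : ℝ) : ℂ) / (z + (t:ℂ))^2

lemma GcReal {x : ℝ} (hx : 0 < x) :
    Gc (x:ℂ) = ((∫ t in Set.Ioi (0:ℝ), t * Real.exp (-t) / (x + t)^2 : ℝ) : ℂ) := by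
  rw [Gc]
  rw [show ((∫ t in Set.Ioi (0:ℝ), t * Real.exp (-t) / (x + t)^2 : ℝ) : ℂ)
      = ∫ t in Set.Ioi (0:ℝ), ((t * Real.exp (-t) / (x + t)^2 : ℝ) : ℂ) from
    (integral_ofReal (𝕜 := ℂ)).symm]
  apply setIntegral_congr_fun measurableSet_Ioi
  intro t ht
  push_cast
  ring

lemma GcDeriv {z : ℂ} (hz : 0 < z.re) :
    HasDerivAt Gc (∫ t in Set.Ioi (0:ℝ), (-2) * ((t * Real.exp (-t) : ℝ) : ℂ) / (z + (t:ℂ))^3) z := by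
  set ε := z.re / 2 with hε
  have hεpos : 0 < ε := by positivity
  have hball : ∀ w : ℂ, w ∈ Metric.ball z ε → ε ≤ w.re := by
    intro w hw
    have h1 : |(w - z).re| ≤ ‖w - z‖ := Complex.abs_re_le_norm _
    have h2 : ‖w - z‖ < ε := by simpa [Complex.dist_eq] using hw
    have := abs_le.1 h1
    simp only [Complex.sub_re] at this
    linarith [this.1]
  have hne : ∀ (w : ℂ) (t : ℝ), ε ≤ w.re → 0 ≤ t → w + (t:ℂ) ≠ 0 := by
    intro w t hw ht h
    have : (w + (t:ℂ)).re = 0 := by rw [h]; simp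
    simp only [Complex.add_re, Complex.ofReal_re] at this
    linarith
  have hmeas : ∀ w : ℂ, ε ≤ w.re →
      AEStronglyMeasurable (fun t : ℝ => ((t * Real.exp (-t) : ℝ) : ℂ) / (w + (t:ℂ))^2)
        (volume.restrict (Set.Ioi 0)) := by
    intro w hw
    apply ContinuousOn.aestronglyMeasurable _ measurableSet_Ioi
    apply ContinuousOn.div
    · exact (Complex.continuous_ofReal.comp (by fun_prop)).continuousOn
    · fun_prop
    · intro t ht
      exact pow_ne_zero _ (hne w t hw (le_of_lt ht))
  have key := hasDerivAt_integral_of_dominated_loc_of_deriv_le (μ := volume.restrict (Set.Ioi 0))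
    (F := fun (w : ℂ) (t : ℝ) => ((t * Real.exp (-t) : ℝ) : ℂ) / (w + (t:ℂ))^2)
    (F' := fun (w : ℂ) (t : ℝ) => (-2) * ((t * Real.exp (-t) : ℝ) : ℂ) / (w + (t:ℂ))^3)
    (x₀ := z) (bound := fun t => 2 / ε^2 * Real.exp (-t)) (Metric.ball_mem_nhds z hεpos) ?_ ?_ ?_ ?_ ?_ ?_
  · exact key.2
  · filter_upwards [(isOpen_lt continuous_const Complex.continuous_re).eventually_mem
      (show ε < z.re by rw [hε]; linarith)] with w hw
    exact hmeas w (le_of_lt hw)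
  · -- integrability of F z
    apply Integrable.mono' (expInt.const_mul (1/ε))
    · exact hmeas z (by rw [hε]; linarith)
    · filter_upwards [ae_restrict_mem measurableSet_Ioi] with t ht
      simp only [mem_Ioi] at ht
      have h1 : z.re + t ≤ ‖z + (t:ℂ)‖ := by
        simpa using Complex.re_le_norm (z + (t:ℂ))
      have h2 : ε ≤ ‖z + (t:ℂ)‖ := le_trans (by rw [hε]; linarith) h1
      have h3 : t ≤ ‖z + (t:ℂ)‖ := le_trans (by rw [hε] at *; linarith) h1
      rw [norm_div, norm_pow, Complex.norm_real, Real.norm_of_nonneg (by positivity)]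
      have hte : t * ε ≤ ‖z + (t:ℂ)‖ ^ 2 := by
        rw [pow_two]; exact mul_le_mul h3 h2 hεpos.le (norm_nonneg _)
      calc t * Real.exp (-t) / ‖z + (t:ℂ)‖ ^ 2
          ≤ t * Real.exp (-t) / (t * ε) := by
            apply div_le_div_of_nonneg_left (by positivity) (by positivity) hte
        _ = 1/ε * Real.exp (-t) := by field_simp
  · apply ContinuousOn.aestronglyMeasurable _ measurableSet_Ioi
    apply ContinuousOn.div
    · exact (by fun_prop : Continuous fun t : ℝ =>
        (-2 : ℂ) * ((t * Real.exp (-t) : ℝ) : ℂ)).continuousOn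
    · fun_prop
    · intro t ht
      exact pow_ne_zero _ (hne z t (by rw [hε]; linarith) (le_of_lt ht))
  · -- bound for F'
    filter_upwards [ae_restrict_mem measurableSet_Ioi] with t ht
    intro w hw
    have hwre := hball w hw
    have ht' : (0:ℝ) < t := ht
    have h1 : w.re + t ≤ ‖w + (t:ℂ)‖ := by
      simpa using Complex.re_le_norm (w + (t:ℂ))
    have h2 : ε ≤ ‖w + (t:ℂ)‖ := le_trans (by linarith) h1
    have h3 : t ≤ ‖w + (t:ℂ)‖ := le_trans (by linarith) h1
    rw [norm_div, norm_mul, norm_pow, Complex.norm_real,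
      Real.norm_of_nonneg (by positivity)]
    have hn2 : ‖(-2 : ℂ)‖ = 2 := by norm_num
    rw [hn2]
    have hte : t * (ε * ε) ≤ ‖w + (t:ℂ)‖ ^ 3 := by
      have hq := mul_le_mul h2 h2 hεpos.le (norm_nonneg _)
      have := mul_le_mul h3 hq (by positivity) (norm_nonneg _)
      calc t * (ε * ε) ≤ ‖w + (t:ℂ)‖ * (‖w + (t:ℂ)‖ * ‖w + (t:ℂ)‖) := this
        _ = ‖w + (t:ℂ)‖ ^ 3 := by ring
    calc 2 * (t * Real.exp (-t)) / ‖w + (t:ℂ)‖ ^ 3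
        ≤ 2 * (t * Real.exp (-t)) / (t * (ε * ε)) := by
          apply div_le_div_of_nonneg_left (by positivity) (by positivity) hte
      _ = 2 / ε ^ 2 * Real.exp (-t) := by field_simp
  · exact expInt.const_mul _
  · -- differentiability in the parameter
    filter_upwards [ae_restrict_mem measurableSet_Ioi] with t ht
    intro w hw
    have hwre := hball w hw
    have hne' : w + (t:ℂ) ≠ 0 := hne w t hwre (le_of_lt ht)
    have h1 : HasDerivAt (fun w : ℂ => w + (t:ℂ)) 1 w := (hasDerivAt_id w).add_const _
    have h2 : HasDerivAt (fun w : ℂ => (w + (t:ℂ))^2) (2*(w + (t:ℂ))) w := by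
      simpa using h1.fun_pow 2
    have h3 : HasDerivAt (fun w : ℂ => ((w + (t:ℂ))^2)⁻¹)
        (-(2*(w + (t:ℂ))) / ((w + (t:ℂ))^2)^2) w := h2.inv (pow_ne_zero _ hne')
    have h4 := h3.const_mul ((t * Real.exp (-t) : ℝ) : ℂ)
    refine h4.congr_deriv ?_
    field_simp

lemma GcAnalytic : AnalyticOnNhd ℂ Gc {z : ℂ | 0 < z.re} := by
  apply DifferentiableOn.analyticOnNhd
    (fun z hz => ((GcDeriv hz).differentiableAt.differentiableWithinAt))
  exact isOpen_lt continuous_const Complex.continuous_re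

noncomputable def Gre : ℝ → ℝ := fun x => (Gc (x:ℂ)).re

lemma Gre_eq {x : ℝ} (hx : 0 < x) :
    Gre x = ∫ t in Set.Ioi (0:ℝ), t * Real.exp (-t) / (x + t)^2 := by
  rw [Gre, GcReal hx, Complex.ofReal_re]

lemma Gre_analytic {x : ℝ} (hx : 0 < x) : AnalyticAt ℝ Gre x := by
  have h1 : AnalyticAt ℝ Gc (x:ℂ) := (GcAnalytic (x:ℂ) (by simpa using hx)).restrictScalars
  have h2 : AnalyticAt ℝ (fun y : ℝ => (y:ℂ)) x := Complex.ofRealCLM.analyticAt x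
  have h3 : AnalyticAt ℝ (fun z : ℂ => z.re) (Gc (x:ℂ)) := Complex.reCLM.analyticAt _
  exact (h3.comp h1).comp h2

lemma Gre_hasDeriv {x : ℝ} (hx : 0 < x) :
    HasDerivAt Gre (-2 * ∫ t in Set.Ioi (0:ℝ), t * Real.exp (-t) / (x + t)^3) x := by
  have hd := GcDeriv (z := (x:ℂ)) (by simpa using hx)
  have hval : (∫ t in Set.Ioi (0:ℝ), (-2) * ((t * Real.exp (-t) : ℝ) : ℂ) / ((x:ℂ) + (t:ℂ))^3)
      = (((-2 * ∫ t in Set.Ioi (0:ℝ), t * Real.exp (-t) / (x + t)^3 : ℝ)) : ℂ) := by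
    have e1 : ((-2 * ∫ t in Set.Ioi (0:ℝ), t * Real.exp (-t) / (x + t)^3 : ℝ) : ℂ)
        = ((∫ t in Set.Ioi (0:ℝ), -2 * (t * Real.exp (-t) / (x + t)^3) : ℝ) : ℂ) := by
      congr 1
      exact (integral_const_mul _ _).symm
    have e2 : ((∫ t in Set.Ioi (0:ℝ), -2 * (t * Real.exp (-t) / (x + t)^3) : ℝ) : ℂ)
        = ∫ t in Set.Ioi (0:ℝ), ((-2 * (t * Real.exp (-t) / (x + t)^3) : ℝ) : ℂ) :=
      (integral_ofReal (𝕜 := ℂ)).symm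
    rw [e1, e2]
    apply setIntegral_congr_fun measurableSet_Ioi
    intro t ht
    push_cast
    ring
  rw [hval] at hd
  have := hd.real_of_complex
  rw [show Gre = fun x : ℝ => (Gc ↑x).re from rfl]
  simpa using this

lemma Gre_deriv_neg {x : ℝ} (hx : 0 < x) : deriv Gre x < 0 := by
  rw [(Gre_hasDeriv hx).deriv]
  have := posAux hx (n := 3) (by norm_num)
  nlinarith

lemma Gre_anti : StrictAntiOn Gre (Set.Ioi 0) := by
  apply strictAntiOn_of_deriv_neg (convex_Ioi 0)
  · exact fun x hx => ((Gre_analytic hx).continuousAt).continuousWithinAt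
  · intro x hx
    rw [interior_Ioi] at hx
    exact Gre_deriv_neg hx

lemma inv_analytic {x₀ : ℝ} (hx₀ : 0 < x₀) :
    ∃ ψ : OpenPartialHomeomorph ℝ ℝ, ψ.source ⊆ Set.Ioi 0 ∧ x₀ ∈ ψ.source ∧
      (⇑ψ = Gre) ∧ AnalyticAt ℝ ψ.symm (Gre x₀) := by
  set d := deriv Gre x₀ with hd
  have hd0 : d ≠ 0 := ne_of_lt (Gre_deriv_neg hx₀)
  have hsd : HasStrictDerivAt Gre d x₀ :=
    ((Gre_analytic hx₀).contDiffAt (n := 1)).hasStrictDerivAt one_ne_zero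
  have hfd := hsd.hasStrictFDerivAt_equiv hd0
  set φ := hfd.toOpenPartialHomeomorph Gre with hφ
  set ψ := φ.restrOpen (Set.Ioi 0) isOpen_Ioi with hψ
  have hsrc : ψ.source = φ.source ∩ Set.Ioi 0 := rfl
  have hcoe : ⇑ψ = Gre := by
    have : ⇑φ = Gre := hfd.toOpenPartialHomeomorph_coe
    exact this
  have hmem : x₀ ∈ ψ.source := ⟨hfd.mem_toOpenPartialHomeomorph_source, hx₀⟩
  refine ⟨ψ, by rw [hsrc]; exact inter_subset_right, hmem, hcoe, ?_⟩
  have han : AnalyticAt ℝ (⇑ψ) x₀ := by rw [hcoe]; exact Gre_analytic hx₀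
  have hfder : fderiv ℝ (⇑ψ) x₀ =
      (ContinuousLinearEquiv.unitsEquivAut ℝ (Units.mk0 d hd0) : ℝ →L[ℝ] ℝ) := by
    rw [hcoe, hfd.hasFDerivAt.fderiv]
  have := ψ.analyticAt_symm' hmem han hfder
  have hψx : ψ x₀ = Gre x₀ := by rw [hcoe]
  rwa [hψx] at this

lemma c_loc {c : ℝ → ℝ} (hpos : ∀ α, 0 < α → 0 < c α)
    (hGc : ∀ α, 0 < α → Gre (c α) = 1/α) {α₀ : ℝ} (hα₀ : 0 < α₀) :
    AnalyticAt ℝ c α₀ := by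
  obtain ⟨ψ, hsub, hmem, hcoe, hsymm⟩ := inv_analytic (hpos α₀ hα₀)
  rw [hGc α₀ hα₀, one_div] at hsymm
  have hinv : AnalyticAt ℝ (fun β : ℝ => β⁻¹) α₀ :=
    (analyticAt_id (𝕜 := ℝ)).inv hα₀.ne'
  have hcomp : AnalyticAt ℝ (fun β : ℝ => ψ.symm β⁻¹) α₀ := by
    exact hsymm.comp hinv
  have htgt : α₀⁻¹ ∈ ψ.target := by
    have h1 := ψ.map_source hmem
    rwa [show ψ (c α₀) = α₀⁻¹ from by rw [hcoe, hGc α₀ hα₀, one_div]] at h1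
  have hevtgt : ∀ᶠ β in nhds α₀, (β : ℝ)⁻¹ ∈ ψ.target := by
    have hct : ContinuousAt (fun β : ℝ => β⁻¹) α₀ := continuousAt_inv₀ hα₀.ne'
    exact hct (ψ.open_target.mem_nhds htgt)
  have heq : (fun β : ℝ => ψ.symm β⁻¹) =ᶠ[nhds α₀] c := by
    filter_upwards [hevtgt, isOpen_Ioi.eventually_mem (show α₀ ∈ Set.Ioi 0 from hα₀)]
      with β h1 h2
    simp only [mem_Ioi] at h2
    have hy : ψ.symm β⁻¹ ∈ ψ.source := ψ.map_target h1
    apply (Gre_anti.injOn (hsub hy) (show c β ∈ Set.Ioi 0 from hpos β h2))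
    have : Gre (ψ.symm β⁻¹) = β⁻¹ := by
      rw [← hcoe]; exact ψ.right_inv h1
    rw [this, hGc β h2, one_div]
  exact hcomp.congr heq

lemma Hfun_real {x : ℝ} (α : ℝ) (hx : 0 < x) :
    Hfun α ((-x : ℝ) : ℂ) =
      (((-x) + α - α * ∫ t in Set.Ioi (0:ℝ), t * Real.exp (-t) / (x + t) : ℝ) : ℂ) := by
  rw [Hfun]
  have e0 : (∫ t in Set.Ioi (0:ℝ), ((t * Real.exp (-t) : ℝ) : ℂ) / (((-x:ℝ):ℂ) - (t:ℂ)))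
      = ((∫ t in Set.Ioi (0:ℝ), -(t * Real.exp (-t) / (x + t)) : ℝ) : ℂ) := by
    rw [show ((∫ t in Set.Ioi (0:ℝ), -(t * Real.exp (-t) / (x + t)) : ℝ) : ℂ)
        = ∫ t in Set.Ioi (0:ℝ), ((-(t * Real.exp (-t) / (x + t)) : ℝ) : ℂ) from
      (integral_ofReal (𝕜 := ℂ)).symm]
    apply setIntegral_congr_fun measurableSet_Ioi
    intro t ht
    simp only [mem_Ioi] at ht
    have hxt : x + t ≠ 0 := by positivity
    have : ((-x:ℝ):ℂ) - (t:ℂ) = ((-(x+t) : ℝ) : ℂ) := by push_cast; ring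
    dsimp only
    have hxtC : ((x:ℂ) + (t:ℂ)) ≠ 0 := by
      have := Complex.ofReal_ne_zero.mpr hxt
      push_cast at this
      exact this
    rw [this, show ((-(t * Real.exp (-t) / (x + t)) : ℝ) : ℂ)
      = ((t * Real.exp (-t) : ℝ) : ℂ) / ((-(x+t) : ℝ) : ℂ) from by
        push_cast
        rw [div_neg]]
  rw [e0, integral_neg]
  push_cast
  ring

lemma s_form {x α sv : ℝ} (hx : 0 < x) (hα : 0 < α)
    (hG : ∫ t in Set.Ioi (0:ℝ), t * Real.exp (-t) / (x + t) ^ 2 = 1 / α)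
    (hsx : (sv : ℂ) = Hfun α ((-x : ℝ) : ℂ)) :
    sv = x * (α - x) / (1 + x) := by
  rw [Hfun_real α hx] at hsx
  have hsr : sv = (-x) + α - α * ∫ t in Set.Ioi (0:ℝ), t * Real.exp (-t) / (x + t) := by
    exact_mod_cast hsx
  rw [g1_eq hx hα hG] at hsr
  rw [hsr]
  have h1x : (1:ℝ) + x ≠ 0 := by positivity
  field_simp
  ring


/-- `α ↦ c_α` and `α ↦ s_α` are real-analytic on `(0,∞)` with the
stated derivatives; `s` is strictly increasing, `s_α → 0` as `α → 0` and
`s_α → ∞` as `α → ∞`. -/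
theorem free_gamma_c_s_analytic_derivatives
    (c : ℝ → ℝ) (s : ℝ → ℝ)
    (hc : ∀ α : ℝ, 0 < α → 0 < c α ∧
      (∫ t in Set.Ioi (0:ℝ), t * Real.exp (-t) / (c α + t)^2) = 1/α)
    (hs : ∀ α : ℝ, 0 < α → ((s α : ℝ) : ℂ) = Hfun α ((-(c α) : ℝ) : ℂ)) :
    (∀ α : ℝ, 0 < α →
      AnalyticAt ℝ c α ∧ AnalyticAt ℝ s α ∧
      deriv c α = c α * (1 + c α) / (α * (α - 2 * c α - (c α)^2)) ∧
      deriv s α = c α * (α + 1) / (α * (1 + c α))) ∧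
    StrictMonoOn s (Set.Ioi 0) ∧
    Filter.Tendsto s (nhdsWithin 0 (Set.Ioi 0)) (nhds 0) ∧
    Filter.Tendsto s Filter.atTop Filter.atTop := by
  have hcpos : ∀ α : ℝ, 0 < α → 0 < c α := fun α hα => (hc α hα).1
  have hGint : ∀ α : ℝ, 0 < α →
      (∫ t in Set.Ioi (0:ℝ), t * Real.exp (-t) / (c α + t)^2) = 1/α :=
    fun α hα => (hc α hα).2
  have hGc : ∀ α : ℝ, 0 < α → Gre (c α) = 1/α := fun α hα => by
    rw [Gre_eq (hcpos α hα)]; exact hGint α hα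
  -- positivity of α - 2c - c²
  have hE : ∀ α : ℝ, 0 < α → 0 < α - 2 * c α - (c α)^2 := by
    intro α hα
    have hx := hcpos α hα
    have h1 := Gre_deriv_neg hx
    rw [(Gre_hasDeriv hx).deriv, g3_eq hx hα (hGint α hα)] at h1
    have h2 : 0 < (α - 2 * c α - (c α)^2) / (2*α*(c α)*(1+c α)) := by linarith
    rcases div_pos_iff.mp h2 with ⟨h3, _⟩ | ⟨_, h4⟩
    · exact h3
    · have : 0 < 2*α*(c α)*(1+c α) := by positivity
      linarith
  -- analyticity of c
  have hanc : ∀ α : ℝ, 0 < α → AnalyticAt ℝ c α := fun α hα => c_loc hcpos hGc hα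
  -- derivative of c
  have hderc : ∀ α : ℝ, 0 < α →
      HasDerivAt c (c α * (1 + c α) / (α * (α - 2 * c α - (c α)^2))) α := by
    intro α hα
    have hx := hcpos α hα
    have hdc : HasDerivAt c (deriv c α) α := ((hanc α hα).differentiableAt).hasDerivAt
    have hgc : HasDerivAt Gre (-(α - 2*c α - (c α)^2) / (α * c α * (1 + c α))) (c α) := by
      have h := Gre_hasDeriv hx
      rw [g3_eq hx hα (hGint α hα)] at h
      convert h using 1
      have h1x : (1:ℝ) + c α ≠ 0 := by positivity
      field_simp
    have hcomp := hgc.comp α hdc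
    have hev : Gre ∘ c =ᶠ[nhds α] fun β : ℝ => β⁻¹ := by
      filter_upwards [isOpen_Ioi.eventually_mem (show α ∈ Set.Ioi 0 from hα)] with β hβ
      simp only [Function.comp_apply]
      rw [hGc β hβ, one_div]
    have hcomp' : HasDerivAt (fun β : ℝ => β⁻¹)
        (-(α - 2*c α - (c α)^2) / (α * c α * (1 + c α)) * deriv c α) α :=
      hcomp.congr_of_eventuallyEq hev.symm
    have huniq := hcomp'.unique (hasDerivAt_inv hα.ne')
    have hEne : α - 2*c α - (c α)^2 ≠ 0 := (hE α hα).ne'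
    have hval : deriv c α = c α * (1 + c α) / (α * (α - 2 * c α - (c α)^2)) := by
      have ha : -(α - 2*c α - (c α)^2) / (α * c α * (1 + c α)) ≠ 0 := by
        apply div_ne_zero (neg_ne_zero.mpr hEne)
        positivity
      have h1x : (1:ℝ) + c α ≠ 0 := by positivity
      have hT : (-(α - 2*c α - (c α)^2) / (α * c α * (1 + c α)))
          * (c α * (1 + c α) / (α * (α - 2 * c α - (c α)^2))) = -(α^2)⁻¹ := by
        field_simp
      exact mul_left_cancel₀ ha (huniq.trans hT.symm)
    rwa [hval] at hdc
  -- closed form of s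
  have hsf : ∀ β : ℝ, 0 < β → s β = c β * (β - c β) / (1 + c β) := by
    intro β hβ
    exact s_form (hcpos β hβ) hβ (hGint β hβ) (hs β hβ)
  -- analyticity of s
  have hans : ∀ α : ℝ, 0 < α → AnalyticAt ℝ s α := by
    intro α hα
    have h1x : (1:ℝ) + c α ≠ 0 := by have := hcpos α hα; positivity
    have hexpr : AnalyticAt ℝ (fun β : ℝ => c β * (β - c β) / (1 + c β)) α :=
      ((hanc α hα).mul ((analyticAt_id (𝕜 := ℝ)).sub (hanc α hα))).div
        ((analyticAt_const (𝕜 := ℝ)).add (hanc α hα)) h1x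
    apply hexpr.congr
    filter_upwards [isOpen_Ioi.eventually_mem (show α ∈ Set.Ioi 0 from hα)] with β hβ
    exact (hsf β hβ).symm
  -- derivative of s
  have hders : ∀ α : ℝ, 0 < α → deriv s α = c α * (α + 1) / (α * (1 + c α)) := by
    intro α hα
    have hx := hcpos α hα
    have h1x : (1:ℝ) + c α ≠ 0 := by positivity
    have hEne : α - 2*c α - (c α)^2 ≠ 0 := (hE α hα).ne'
    set V := c α * (1 + c α) / (α * (α - 2 * c α - (c α)^2)) with hV
    have hd := hderc α hα
    have hnum : HasDerivAt (fun β : ℝ => c β * (β - c β))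
        (V * (α - c α) + c α * (1 - V)) α :=
      hd.mul ((hasDerivAt_id α).sub hd)
    have hden : HasDerivAt (fun β : ℝ => 1 + c β) V α := hd.const_add 1
    have hdiv := hnum.fun_div hden h1x
    have hseq : s =ᶠ[nhds α] fun β : ℝ => c β * (β - c β) / (1 + c β) := by
      filter_upwards [isOpen_Ioi.eventually_mem (show α ∈ Set.Ioi 0 from hα)] with β hβ
      exact hsf β hβ
    rw [hseq.deriv_eq, hdiv.deriv]
    rw [hV]
    field_simp
    have hD : (α - 2 * c α - c α ^ 2) * (α - 2 * c α - c α ^ 2)⁻¹ = 1 := mul_inv_cancel₀ hEne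
    linear_combination hD
  -- c ≤ α/4
  have hcb : ∀ α : ℝ, 0 < α → c α ≤ α / 4 := by
    intro α hα
    have hx := hcpos α hα
    have key : c α * (1/α) ≤ 1/4 := by
      rw [← hGint α hα, ← integral_const_mul]
      have hle : (∫ t in Set.Ioi (0:ℝ), c α * (t * Real.exp (-t) / (c α + t)^2))
          ≤ ∫ t in Set.Ioi (0:ℝ), Real.exp (-t) / 4 := by
        apply setIntegral_mono_on ((intT hx (by norm_num)).const_mul (c α))
          (expInt.div_const 4) measurableSet_Ioi
        intro t ht
        simp only [mem_Ioi] at ht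
        have hxt : (0:ℝ) < (c α + t)^2 := by positivity
        rw [mul_div_assoc'  , div_le_div_iff₀ hxt (by norm_num)]
        nlinarith [sq_nonneg (c α - t), Real.exp_pos (-t), mul_pos hx ht]
      calc (∫ t in Set.Ioi (0:ℝ), c α * (t * Real.exp (-t) / (c α + t)^2))
          ≤ ∫ t in Set.Ioi (0:ℝ), Real.exp (-t) / 4 := hle
        _ = 1/4 := by rw [integral_div, integral_exp_neg_Ioi_zero]
    have : c α * (1/α) = c α / α := by ring
    rw [this, div_le_div_iff₀ hα (by norm_num)] at key
    linarith
  refine ⟨fun α hα => ⟨hanc α hα, hans α hα, (hderc α hα).deriv, hders α hα⟩, ?_, ?_, ?_⟩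
  · -- strict mono
    apply strictMonoOn_of_deriv_pos (convex_Ioi 0)
    · exact fun β hβ => ((hans β hβ).continuousAt).continuousWithinAt
    · intro β hβ
      rw [interior_Ioi] at hβ
      simp only [mem_Ioi] at hβ
      rw [hders β hβ]
      have hcβ := hcpos β hβ
      apply div_pos (mul_pos hcβ (by linarith)) (mul_pos hβ (by linarith))
  · -- limit at 0
    apply tendsto_of_tendsto_of_tendsto_of_le_of_le'
      (tendsto_const_nhds (x := (0:ℝ)))
      (show Tendsto (fun β : ℝ => β^2) (nhdsWithin 0 (Set.Ioi 0)) (nhds 0) from by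
        have := ((continuous_pow 2).tendsto (0:ℝ)).mono_left
          (nhdsWithin_le_nhds (s := Set.Ioi 0))
        simpa using this)
    · filter_upwards [self_mem_nhdsWithin] with β hβ
      simp only [mem_Ioi] at hβ
      have hx := hcpos β hβ
      have hxb := hcb β hβ
      rw [hsf β hβ]
      apply div_nonneg (mul_nonneg hx.le (by linarith)) (by linarith)
    · filter_upwards [self_mem_nhdsWithin] with β hβ
      simp only [mem_Ioi] at hβ
      have hx := hcpos β hβ
      have hxb := hcb β hβ
      rw [hsf β hβ]
      have h1 : c β * (β - c β) / (1 + c β) ≤ c β * (β - c β) :=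
        div_le_self (mul_nonneg hx.le (by linarith)) (by linarith)
      nlinarith
  · -- limit at ∞
    have hg1 : 0 < Gre 1 := by
      rw [Gre_eq one_pos]
      exact posAux one_pos (by norm_num)
    apply tendsto_atTop_mono' atTop
      (show (fun β : ℝ => 3/8 * β) ≤ᶠ[atTop] s from ?_)
      (tendsto_id.const_mul_atTop (by norm_num))
    filter_upwards [eventually_ge_atTop (max 1 (1/Gre 1)), eventually_gt_atTop (0:ℝ)]
      with β hβ1 hβ0
    have hx := hcpos β hβ0
    have hxb := hcb β hβ0
    have hxge1 : 1 ≤ c β := by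
      by_contra hlt
      push_neg at hlt
      have hanti := Gre_anti (show c β ∈ Set.Ioi 0 from hx)
        (show (1:ℝ) ∈ Set.Ioi 0 by norm_num) hlt
      rw [hGc β hβ0] at hanti
      have hβ2 : 1/Gre 1 ≤ β := le_trans (le_max_right _ _) hβ1
      rw [div_le_iff₀ hg1] at hβ2
      have : 1/β ≤ Gre 1 := by
        rw [div_le_iff₀ hβ0]
        linarith [mul_comm β (Gre 1)]
      linarith
    rw [hsf β hβ0, le_div_iff₀ (show (0:ℝ) < 1 + c β by linarith)]
    nlinarith [mul_le_mul_of_nonneg_left hxb hx.le,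
      mul_nonneg (show (0:ℝ) ≤ c β - 1 by linarith) hβ0.le]
end
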